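/- For two agents with arbitrary monotonic valuations over m items, the number of EF1 allocations is at least C(m, m/2) if m is even, and at least 2·C(m−1, (m−1)/2) if m is odd. -/

import Mathlib

open Finset Classical

/-- Bundle `A` is EF1 for valuation `u` (items `M`). -/
def EF1 {α : Type*} [DecidableEq α] (M : Finset α) (u : Finset α → ℝ) (A : Finset α) : Prop :=
  u (M \ A) ≤ u A ∨ ∃ j ∈ M \ A, u ((M \ A).erase j) ≤ u A

/-- Bundle `A` is EFX for valuation `u` (items `M`). -/
def EFX {α : Type*} [DecidableEq α] (M : Finset α) (u : Finset α → ℝ) (A : Finset α) : Prop :=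
  ∀ j ∈ M \ A, u ((M \ A).erase j) ≤ u A

open scoped FinsetFamily

namespace EF1Aux

/-- 2-intersecting family of finsets of naturals. -/
def Inter2 (𝒜 : Finset (Finset ℕ)) : Prop := ∀ A ∈ 𝒜, ∀ B ∈ 𝒜, 2 ≤ (A ∩ B).card

lemma shadow_card {𝒜 : Finset (Finset ℕ)} {ℓ : ℕ} (h : ∀ A ∈ 𝒜, A.card = ℓ) {B : Finset ℕ}
    (hB : B ∈ ∂ 𝒜) : B.card = ℓ - 1 := by
  rw [mem_shadow_iff] at hB
  obtain ⟨A, hA, a, ha, rfl⟩ := hB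
  rw [card_erase_of_mem ha, h A hA]

lemma shadow_range {𝒜 : Finset (Finset ℕ)} {m : ℕ} (h : ∀ A ∈ 𝒜, A ⊆ range m) {B : Finset ℕ}
    (hB : B ∈ ∂ 𝒜) : B ⊆ range m := by
  rw [mem_shadow_iff] at hB
  obtain ⟨A, hA, a, ha, rfl⟩ := hB
  exact (erase_subset _ _).trans (h A hA)

lemma my_lym {m ℓ : ℕ} {𝒜 : Finset (Finset ℕ)} (hg : ∀ A ∈ 𝒜, A ⊆ range m)
    (hs : ∀ A ∈ 𝒜, A.card = ℓ) (hℓ : 1 ≤ ℓ) :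
    𝒜.card * ℓ ≤ (∂ 𝒜).card * (m - ℓ + 1) := by
  apply card_mul_le_card_mul (fun A B => B ⊆ A)
  · intro A hA
    have hsub : A.image A.erase ⊆ (∂ 𝒜).bipartiteAbove (fun A B => B ⊆ A) A := by
      intro B hB
      simp only [mem_image] at hB
      obtain ⟨x, hx, rfl⟩ := hB
      rw [bipartiteAbove, mem_filter]
      refine ⟨?_, erase_subset _ _⟩
      rw [mem_shadow_iff]
      exact ⟨A, hA, x, hx, rfl⟩
    calc ℓ = (A.image A.erase).card := by
              rw [card_image_of_injOn (A.erase_injOn), hs A hA]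
      _ ≤ _ := card_le_card hsub
  · intro B hB
    obtain ⟨A₀, hA₀, a₀, ha₀, rfl⟩ := mem_shadow_iff.1 hB
    have hBm : (A₀.erase a₀) ⊆ range m := (erase_subset _ _).trans (hg A₀ hA₀)
    have hBc : (A₀.erase a₀).card = ℓ - 1 := by rw [card_erase_of_mem ha₀, hs A₀ hA₀]
    have hℓm : ℓ ≤ m := by
      rw [← hs A₀ hA₀]; exact (card_le_card (hg A₀ hA₀)).trans_eq (card_range m)
    set B := A₀.erase a₀ with hBdef
    have hsub : 𝒜.bipartiteBelow (fun A B => B ⊆ A) B ⊆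
        (range m \ B).image (fun x => insert x B) := by
      intro A hA
      rw [bipartiteBelow, mem_filter] at hA
      obtain ⟨hA, hBA⟩ := hA
      have hcard : (A \ B).card = 1 := by
        rw [card_sdiff_of_subset hBA, hs A hA, hBc]; omega
      obtain ⟨x, hx⟩ := card_eq_one.1 hcard
      have hxA : x ∈ A \ B := hx ▸ mem_singleton_self x
      rw [mem_sdiff] at hxA
      refine mem_image.2 ⟨x, ?_, ?_⟩
      · rw [mem_sdiff]; exact ⟨hg A hA hxA.1, hxA.2⟩
      · have h1 : {x} ∪ B = A := by rw [← hx]; exact sdiff_union_of_subset hBA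
        rw [insert_eq, h1]
    calc (𝒜.bipartiteBelow (fun A B => B ⊆ A) B).card
        ≤ ((range m \ B).image (fun x => insert x B)).card := card_le_card hsub
      _ ≤ (range m \ B).card := card_image_le
      _ = m - ℓ + 1 := by rw [card_sdiff_of_subset hBm, card_range, hBc]; omega


lemma compress_moved {i j : ℕ} (hij : i ≠ j) {Z : Finset ℕ} (hjZ : j ∈ Z) (hiZ : i ∉ Z) :
    UV.compress {i} {j} Z = insert i (Z.erase j) := by
  rw [UV.compress, if_pos ⟨disjoint_singleton_left.2 hiZ, singleton_subset_iff.2 hjZ⟩]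
  rw [sup_eq_union, union_comm, ← insert_eq, ← erase_eq, erase_insert_of_ne hij]

lemma compress_eq_of_not {i j : ℕ} {Z : Finset ℕ} (h : ¬(j ∈ Z ∧ i ∉ Z)) :
    UV.compress {i} {j} Z = Z := by
  rw [UV.compress, if_neg]
  rintro ⟨h1, h2⟩
  exact h ⟨singleton_subset_iff.1 h2, disjoint_singleton_left.1 h1⟩

/-- helper for kept-vs-moved case -/
lemma inter2_aux {i j : ℕ} (hij : i ≠ j) {𝒜 : Finset (Finset ℕ)} (h : Inter2 𝒜)
    {X Z : Finset ℕ} (hX : X ∈ 𝒜) (hcX : UV.compress {i} {j} X ∈ 𝒜) (hZ : Z ∈ 𝒜)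
    (hjZ : j ∈ Z) (hiZ : i ∉ Z) : 2 ≤ (X ∩ insert i (Z.erase j)).card := by
  by_cases hjX : j ∈ X
  · by_cases hiX : i ∈ X
    · -- i,j ∈ X
      have hsub : insert i ((X ∩ Z).erase j) ⊆ X ∩ insert i (Z.erase j) := by
        intro x hx
        rcases mem_insert.1 hx with rfl | hx
        · exact mem_inter.2 ⟨hiX, mem_insert_self _ _⟩
        · rw [mem_erase, mem_inter] at hx
          exact mem_inter.2 ⟨hx.2.1, mem_insert.2 (Or.inr (mem_erase.2 ⟨hx.1, hx.2.2⟩))⟩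
      have hcard : 2 ≤ (insert i ((X ∩ Z).erase j)).card := by
        rw [card_insert_of_notMem (fun hmem => hiZ (mem_inter.1 (mem_erase.1 hmem).2).2)]
        have h2 := h X hX Z hZ
        have hje : j ∈ X ∩ Z := mem_inter.2 ⟨hjX, hjZ⟩
        rw [card_erase_of_mem hje]
        omega
      exact hcard.trans (card_le_card hsub)
    · -- j ∈ X, i ∉ X : use compressed X
      rw [compress_moved hij hjX hiX] at hcX
      have h2 := h _ hcX Z hZ
      have hEq : insert i (X.erase j) ∩ Z = (X ∩ Z).erase j := by
        ext x
        simp only [mem_inter, mem_insert, mem_erase]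
        constructor
        · rintro ⟨rfl | ⟨hne, hxX⟩, hxZ⟩
          · exact absurd hxZ hiZ
          · exact ⟨hne, hxX, hxZ⟩
        · rintro ⟨hne, hxX, hxZ⟩
          exact ⟨Or.inr ⟨hne, hxX⟩, hxZ⟩
      rw [hEq] at h2
      refine h2.trans (card_le_card ?_)
      intro x hx
      rw [mem_erase, mem_inter] at hx
      exact mem_inter.2 ⟨hx.2.1, mem_insert.2 (Or.inr (mem_erase.2 ⟨hx.1, hx.2.2⟩))⟩
  · -- j ∉ X
    refine (h X hX Z hZ).trans (card_le_card ?_)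
    intro x hx
    rw [mem_inter] at hx
    have hxj : x ≠ j := fun h' => hjX (h' ▸ hx.1)
    exact mem_inter.2 ⟨hx.1, mem_insert.2 (Or.inr (mem_erase.2 ⟨hxj, hx.2⟩))⟩

lemma Inter2.compression {i j : ℕ} (hij : i ≠ j) {𝒜 : Finset (Finset ℕ)} (h : Inter2 𝒜) :
    Inter2 (UV.compression {i} {j} 𝒜) := by
  intro X hX Y hY
  rw [UV.mem_compression] at hX hY
  have moved : ∀ {Z : Finset ℕ}, Z ∈ 𝒜 → UV.compress {i} {j} Z ∉ 𝒜 →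
      j ∈ Z ∧ i ∉ Z ∧ UV.compress {i} {j} Z = insert i (Z.erase j) := by
    intro Z hZ hcZ
    by_cases hc : j ∈ Z ∧ i ∉ Z
    · exact ⟨hc.1, hc.2, compress_moved hij hc.1 hc.2⟩
    · rw [compress_eq_of_not hc] at hcZ; exact absurd hZ hcZ
  rcases hX with ⟨hX𝒜, hcX⟩ | ⟨hXn, Z₁, hZ₁, rfl⟩
  · rcases hY with ⟨hY𝒜, hcY⟩ | ⟨hYn, Z₂, hZ₂, rfl⟩
    · exact h X hX𝒜 Y hY𝒜
    · obtain ⟨hj2, hi2, he2⟩ := moved hZ₂ (fun hmem => hYn hmem)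
      rw [he2]
      exact inter2_aux hij h hX𝒜 hcX hZ₂ hj2 hi2
  · obtain ⟨hj1, hi1, he1⟩ := moved hZ₁ (fun hmem => hXn hmem)
    rcases hY with ⟨hY𝒜, hcY⟩ | ⟨hYn, Z₂, hZ₂, rfl⟩
    · rw [he1, inter_comm]
      exact inter2_aux hij h hY𝒜 hcY hZ₁ hj1 hi1
    · obtain ⟨hj2, hi2, he2⟩ := moved hZ₂ (fun hmem => hYn hmem)
      rw [he1, he2]
      have hsub : insert i ((Z₁ ∩ Z₂).erase j) ⊆
          insert i (Z₁.erase j) ∩ insert i (Z₂.erase j) := by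
        intro x hx
        rcases mem_insert.1 hx with rfl | hx
        · exact mem_inter.2 ⟨mem_insert_self _ _, mem_insert_self _ _⟩
        · rw [mem_erase, mem_inter] at hx
          exact mem_inter.2 ⟨mem_insert.2 (Or.inr (mem_erase.2 ⟨hx.1, hx.2.1⟩)),
            mem_insert.2 (Or.inr (mem_erase.2 ⟨hx.1, hx.2.2⟩))⟩
      refine le_trans ?_ (card_le_card hsub)
      rw [card_insert_of_notMem (fun hmem => hi1 (mem_inter.1 (mem_erase.1 hmem).2).1)]
      have h2 := h _ hZ₁ _ hZ₂
      have hje : j ∈ Z₁ ∩ Z₂ := mem_inter.2 ⟨hj1, hj2⟩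
      rw [card_erase_of_mem hje]
      omega


/-- total weight of a family -/
def fam_measure (𝒜 : Finset (Finset ℕ)) : ℕ := ∑ A ∈ 𝒜, ∑ x ∈ A, x

lemma measure_lt {i j : ℕ} (hij : i < j) {𝒜 : Finset (Finset ℕ)}
    (h : ¬ UV.IsCompressed {i} {j} 𝒜) :
    fam_measure (UV.compression {i} {j} 𝒜) < fam_measure 𝒜 := by
  classical
  set c : Finset ℕ → Finset ℕ := UV.compress {i} {j} with hc
  have hne : i ≠ j := hij.ne
  set K := 𝒜.filter (fun A => c A ∈ 𝒜) with hK
  set Mv := 𝒜.filter (fun A => c A ∉ 𝒜) with hMv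
  have hcomp : UV.compression {i} {j} 𝒜 = K ∪ Mv.image c := by
    rw [UV.compression]
    congr 1
    ext B
    simp only [mem_filter, mem_image, hMv]
    constructor
    · rintro ⟨⟨A, hA, rfl⟩, hB⟩
      exact ⟨A, ⟨hA, hB⟩, rfl⟩
    · rintro ⟨A, ⟨hA, hcA⟩, rfl⟩
      exact ⟨⟨A, hA, rfl⟩, hcA⟩
  have hMvne : Mv.Nonempty := by
    rcases Mv.eq_empty_or_nonempty with he | hne'
    · exfalso; apply h
      unfold UV.IsCompressed
      rw [hcomp, he, image_empty, union_empty, hK]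
      apply filter_true_of_mem
      intro A hA
      by_cases hcond : j ∈ A ∧ i ∉ A
      · by_contra hnot
        have : A ∈ Mv := mem_filter.2 ⟨hA, hnot⟩
        rw [he] at this; exact notMem_empty _ this
      · show c A ∈ 𝒜
        rw [hc, compress_eq_of_not hcond]; exact hA
    · exact hne'
  have hdisj : Disjoint K (Mv.image c) := by
    rw [disjoint_left]
    intro B hBK hBM
    obtain ⟨A, hA, rfl⟩ := mem_image.1 hBM
    have := (mem_filter.1 hA).2
    exact this ((mem_filter.1 hBK).1)
  have hinj : Set.InjOn c ↑Mv := by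
    have := UV.compress_injOn (u := ({i} : Finset ℕ)) (v := ({j} : Finset ℕ)) (s := 𝒜)
    convert this using 2
  rw [fam_measure, hcomp, sum_union hdisj, sum_image (fun x hx y hy => hinj (by simpa using hx) (by simpa using hy))]
  have hsplit : fam_measure 𝒜 = ∑ A ∈ K, (∑ x ∈ A, x) + ∑ A ∈ Mv, (∑ x ∈ A, x) := by
    rw [fam_measure, hK, hMv, sum_filter_add_sum_filter_not]
  rw [hsplit]
  apply Nat.add_lt_add_left
  apply Finset.sum_lt_sum_of_nonempty hMvne
  intro A hA
  obtain ⟨hA𝒜, hcA⟩ := mem_filter.1 hA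
  have hcond : j ∈ A ∧ i ∉ A := by
    by_contra hnot
    rw [hc] at hcA
    rw [compress_eq_of_not hnot] at hcA
    exact hcA hA𝒜
  rw [hc, compress_moved hne hcond.1 hcond.2]
  rw [sum_insert (fun hmem => hcond.2 (mem_of_mem_erase hmem))]
  have := Finset.add_sum_erase A id hcond.1
  simp only [id] at this
  have hj_le : j ≤ ∑ x ∈ A, x := Finset.single_le_sum (fun x _ => Nat.zero_le x) hcond.1
  omega


lemma exists_shifted (m ℓ : ℕ) :
    ∀ n (𝒜 : Finset (Finset ℕ)), fam_measure 𝒜 = n →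
    (∀ A ∈ 𝒜, A ⊆ range m) → (∀ A ∈ 𝒜, A.card = ℓ) → Inter2 𝒜 →
    ∃ ℬ : Finset (Finset ℕ), ℬ.card = 𝒜.card ∧ (∂ ℬ).card ≤ (∂ 𝒜).card ∧
      (∀ A ∈ ℬ, A ⊆ range m) ∧ (∀ A ∈ ℬ, A.card = ℓ) ∧ Inter2 ℬ ∧
      ∀ i j : ℕ, i < j → j < m → UV.IsCompressed {i} {j} ℬ := by
  intro n
  induction n using Nat.strong_induction_on with
  | _ n ih =>
    intro 𝒜 hμ hg hs h2
    by_cases hc : ∀ i j : ℕ, i < j → j < m → UV.IsCompressed {i} {j} 𝒜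
    · exact ⟨𝒜, rfl, le_rfl, hg, hs, h2, hc⟩
    · push_neg at hc
      obtain ⟨i, j, hij, hjm, hnc⟩ := hc
      set ℬ := UV.compression {i} {j} 𝒜 with hB
      have hmem : ∀ A ∈ ℬ, (A ∈ 𝒜) ∨ ∃ Z ∈ 𝒜, j ∈ Z ∧ i ∉ Z ∧ A = insert i (Z.erase j) := by
        intro A hA
        rw [hB, UV.mem_compression] at hA
        rcases hA with ⟨h1, _⟩ | ⟨hn, Z, hZ, rfl⟩
        · exact Or.inl h1
        · by_cases hcond : j ∈ Z ∧ i ∉ Z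
          · exact Or.inr ⟨Z, hZ, hcond.1, hcond.2, compress_moved hij.ne hcond.1 hcond.2⟩
          · rw [compress_eq_of_not hcond]
            exact Or.inl hZ
      have hgB : ∀ A ∈ ℬ, A ⊆ range m := by
        intro A hA
        rcases hmem A hA with h1 | ⟨Z, hZ, hjZ, hiZ, rfl⟩
        · exact hg A h1
        · intro x hx
          rcases mem_insert.1 hx with rfl | hx
          · exact mem_range.2 (hij.trans hjm)
          · exact hg Z hZ (mem_of_mem_erase hx)
      have hsB : ∀ A ∈ ℬ, A.card = ℓ := by
        intro A hA
        rcases hmem A hA with h1 | ⟨Z, hZ, hjZ, hiZ, rfl⟩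
        · exact hs A h1
        · rw [card_insert_of_notMem (fun hmm => hiZ (mem_of_mem_erase hmm)),
            card_erase_of_mem hjZ]
          have h1 : 1 ≤ Z.card := card_pos.2 ⟨j, hjZ⟩
          rw [← hs Z hZ]
          omega
      have h2B : Inter2 ℬ := Inter2.compression hij.ne h2
      have hcardB : ℬ.card = 𝒜.card := UV.card_compression _ _ _
      have hshadowB : (∂ ℬ).card ≤ (∂ 𝒜).card := by
        apply UV.card_shadow_compression_le
        intro x hx
        refine ⟨j, mem_singleton_self _, ?_⟩
        rw [mem_singleton] at hx
        subst hx
        simp only [erase_singleton]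
        exact UV.compression_self _ _
      have hlt : fam_measure ℬ < n := hμ ▸ measure_lt hij hnc
      obtain ⟨ℬ', hc1, hc2, hc3, hc4, hc5, hc6⟩ :=
        ih (fam_measure ℬ) hlt ℬ rfl hgB hsB h2B
      exact ⟨ℬ', hc1.trans hcardB, hc2.trans hshadowB, hc3, hc4, hc5, hc6⟩

theorem shadow_ratio :
    ∀ (m : ℕ), ∀ (ℓ : ℕ) (𝒜 : Finset (Finset ℕ)), (∀ A ∈ 𝒜, A ⊆ range m) →
    (∀ A ∈ 𝒜, A.card = ℓ) → Inter2 𝒜 →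
    ℓ * 𝒜.card ≤ (ℓ - 1) * (∂ 𝒜).card := by
  intro m
  induction m using Nat.strong_induction_on with
  | _ m ih =>
    intro ℓ 𝒜 hg hs h2
    rcases 𝒜.eq_empty_or_nonempty with rfl | ⟨A₀, hA₀⟩
    · simp
    have hℓ2 : 2 ≤ ℓ := by
      have := h2 A₀ hA₀ A₀ hA₀
      rwa [inter_self, hs A₀ hA₀] at this
    have hℓm : ℓ ≤ m := by
      rw [← hs A₀ hA₀]
      exact (card_le_card (hg A₀ hA₀)).trans_eq (card_range m)
    by_cases hcase : m ≤ 2 * ℓ - 2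
    · have h := my_lym hg hs (by omega)
      calc ℓ * 𝒜.card = 𝒜.card * ℓ := mul_comm _ _
        _ ≤ (∂ 𝒜).card * (m - ℓ + 1) := h
        _ ≤ (∂ 𝒜).card * (ℓ - 1) := Nat.mul_le_mul_left _ (by omega)
        _ = (ℓ - 1) * (∂ 𝒜).card := mul_comm _ _
    · push_neg at hcase
      obtain ⟨ℬ, hbc, hbs, hbg, hbsz, hb2, hbcomp⟩ :=
        exists_shifted m ℓ (fam_measure 𝒜) 𝒜 rfl hg hs h2
      set p := m - 1 with hp
      have hm3 : 3 ≤ m := by omega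
      set ℬ₀ := ℬ.filter (fun A => p ∉ A) with hB0
      set ℬ₁' := ℬ.filter (fun A => p ∈ A) with hB1'
      set ℬ₁ := ℬ₁'.image (fun A => A.erase p) with hB1
      have hsublem : ∀ A ∈ ℬ, A ⊆ range m := hbg
      -- ℬ₀ properties
      have hg0 : ∀ A ∈ ℬ₀, A ⊆ range p := by
        intro A hA x hx
        obtain ⟨hAB, hpA⟩ := mem_filter.1 hA
        have hxm := mem_range.1 (hbg A hAB hx)
        have : x ≠ p := fun h => hpA (h ▸ hx)
        rw [mem_range]; omega
      have hs0 : ∀ A ∈ ℬ₀, A.card = ℓ := fun A hA => hbsz A (mem_filter.1 hA).1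
      have h20 : Inter2 ℬ₀ := fun A hA B hB =>
        hb2 A (mem_filter.1 hA).1 B (mem_filter.1 hB).1
      -- ℬ₁ properties
      have hg1 : ∀ A ∈ ℬ₁, A ⊆ range p := by
        intro A hA x hx
        obtain ⟨B, hB, rfl⟩ := mem_image.1 hA
        have hBb := (mem_filter.1 hB).1
        have hxm := mem_range.1 (hbg B hBb (mem_of_mem_erase hx))
        have : x ≠ p := (mem_erase.1 hx).1
        rw [mem_range]; omega
      have hs1 : ∀ A ∈ ℬ₁, A.card = ℓ - 1 := by
        intro A hA
        obtain ⟨B, hB, rfl⟩ := mem_image.1 hA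
        obtain ⟨hBb, hpB⟩ := mem_filter.1 hB
        rw [card_erase_of_mem hpB, hbsz B hBb]
      have h21 : Inter2 ℬ₁ := by
        intro A' hA' B' hB'
        obtain ⟨A, hA, rfl⟩ := mem_image.1 hA'
        obtain ⟨B, hB, rfl⟩ := mem_image.1 hB'
        obtain ⟨hAb, hpA⟩ := mem_filter.1 hA
        obtain ⟨hBb, hpB⟩ := mem_filter.1 hB
        have hAB : 2 ≤ (A ∩ B).card := hb2 A hAb B hBb
        have hinter : A.erase p ∩ B.erase p = (A ∩ B).erase p := by
          ext x
          simp only [mem_inter, mem_erase]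
          tauto
        rw [hinter]
        have hpAB : p ∈ A ∩ B := mem_inter.2 ⟨hpA, hpB⟩
        rw [card_erase_of_mem hpAB]
        -- suffices 3 ≤ (A ∩ B).card
        by_contra hlt
        push_neg at hlt
        have hAB2 : (A ∩ B).card = 2 := by omega
        -- find x outside A ∪ B
        have hunion : (A ∪ B).card = 2 * ℓ - 2 := by
          have := card_union_add_card_inter A B
          rw [hbsz A hAb, hbsz B hBb, hAB2] at this
          omega
        have hABsub : A ∪ B ⊆ range m := union_subset (hbg A hAb) (hbg B hBb)
        have hne : A ∪ B ≠ range m := by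
          intro h
          rw [h, card_range] at hunion
          omega
        obtain ⟨x, hxr, hxAB⟩ := exists_of_ssubset (Finset.ssubset_iff_subset_ne.2 ⟨hABsub, hne⟩)
        have hxm := mem_range.1 hxr
        have hxp : x ≠ p := by
          intro h
          exact hxAB (h ▸ mem_union_left _ hpA)
        have hxlt : x < p := by omega
        have hcomp := hbcomp x p hxlt (by omega)
        have hcA : insert x (A.erase p) ∈ ℬ := by
          have := UV.compress_mem_compression (u := ({x} : Finset ℕ)) (v := ({p} : Finset ℕ)) hAb
          rw [hcomp.eq] at this
          rwa [compress_moved (by omega) hpA (fun hxA => hxAB (mem_union_left _ hxA))] at this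
        have h2' := hb2 _ hcA B hBb
        have heq : insert x (A.erase p) ∩ B = (A ∩ B).erase p := by
          ext y
          simp only [mem_inter, mem_insert, mem_erase]
          constructor
          · rintro ⟨rfl | ⟨hne', hyA⟩, hyB⟩
            · exact absurd (mem_union_right _ hyB) hxAB
            · exact ⟨hne', hyA, hyB⟩
          · rintro ⟨hne', hyA, hyB⟩
            exact ⟨Or.inr ⟨hne', hyA⟩, hyB⟩
        rw [heq, card_erase_of_mem hpAB, hAB2] at h2'
        omega
      -- cardinalities
      have hc01 : ℬ.card = ℬ₀.card + ℬ₁'.card := by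
        rw [hB0, hB1']
        rw [add_comm]
        exact (card_filter_add_card_filter_not (fun A => p ∈ A)).symm
      have hc1' : ℬ₁.card = ℬ₁'.card := by
        apply card_image_of_injOn
        intro A hA B hB hAB
        have hpA : p ∈ A := (mem_filter.1 (mem_coe.1 hA)).2
        have hpB : p ∈ B := (mem_filter.1 (mem_coe.1 hB)).2
        exact erase_injOn' p hpA hpB hAB
      -- shadow decomposition
      have hXsub : ∂ ℬ₀ ∪ ℬ₁ ⊆ ∂ ℬ := by
        apply union_subset
        · exact shadow_monotone (filter_subset _ _)
        · intro A hA
          obtain ⟨B, hB, rfl⟩ := mem_image.1 hA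
          obtain ⟨hBb, hpB⟩ := mem_filter.1 hB
          rw [mem_shadow_iff]
          exact ⟨B, hBb, p, hpB, rfl⟩
      have hYsub : (∂ ℬ₁).image (insert p) ⊆ ∂ ℬ := by
        intro D hD
        obtain ⟨D', hD', rfl⟩ := mem_image.1 hD
        obtain ⟨B', hB', x, hx, rfl⟩ := mem_shadow_iff.1 hD'
        obtain ⟨A, hA, rfl⟩ := mem_image.1 hB'
        obtain ⟨hAb, hpA⟩ := mem_filter.1 hA
        have hxp : x ≠ p := (mem_erase.1 hx).1
        have hxA : x ∈ A := mem_of_mem_erase hx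
        have : insert p ((A.erase p).erase x) = A.erase x := by
          rw [erase_right_comm, insert_erase (mem_erase.2 ⟨(Ne.symm hxp), hpA⟩)]
        rw [this, mem_shadow_iff]
        exact ⟨A, hAb, x, hxA, rfl⟩
      have hpfree : ∀ D ∈ ∂ ℬ₁, p ∉ D := by
        intro D hD hpD
        obtain ⟨B', hB', x, hx, rfl⟩ := mem_shadow_iff.1 hD
        obtain ⟨A, hA, rfl⟩ := mem_image.1 hB'
        exact (mem_erase.1 (mem_of_mem_erase hpD)).1 rfl
      have hYcard : ((∂ ℬ₁).image (insert p)).card = (∂ ℬ₁).card := by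
        apply card_image_of_injOn
        intro D₁ h₁ D₂ h₂ heq
        have hp₁ : p ∉ D₁ := hpfree D₁ (by simpa using h₁)
        have hp₂ : p ∉ D₂ := hpfree D₂ (by simpa using h₂)
        rw [← erase_insert hp₁, ← erase_insert hp₂, heq]
      have hdisjXY : Disjoint (∂ ℬ₀ ∪ ℬ₁) ((∂ ℬ₁).image (insert p)) := by
        rw [disjoint_left]
        intro D hDX hDY
        obtain ⟨D', hD', rfl⟩ := mem_image.1 hDY
        have hpD : p ∈ insert p D' := mem_insert_self _ _
        rcases mem_union.1 hDX with hD0 | hD1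
        · obtain ⟨A, hA, x, hx, heq⟩ := mem_shadow_iff.1 hD0
          have hpA : p ∉ A := (mem_filter.1 hA).2
          rw [← heq] at hpD
          exact hpA (mem_of_mem_erase hpD)
        · obtain ⟨A, hA, heq⟩ := mem_image.1 hD1
          rw [← heq] at hpD
          exact (mem_erase.1 hpD).1 rfl
      -- inductive hypotheses
      have ih0 : ℓ * ℬ₀.card ≤ (ℓ - 1) * (∂ ℬ₀).card := ih p (by omega) ℓ ℬ₀ hg0 hs0 h20
      have ih1 : (ℓ - 1) * ℬ₁.card ≤ (ℓ - 2) * (∂ ℬ₁).card := by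
        have := ih p (by omega) (ℓ - 1) ℬ₁ hg1 hs1 h21
        have hsub2 : ℓ - 1 - 1 = ℓ - 2 := by omega
        rwa [hsub2] at this
      have ih1' : ℓ * ℬ₁.card ≤ (ℓ - 1) * (∂ ℬ₁).card := by
        by_cases hl3 : 3 ≤ ℓ
        · obtain ⟨a, rfl⟩ := Nat.exists_eq_add_of_le hl3
          have e1 : 3 + a - 1 = a + 2 := by omega
          have e2 : 3 + a - 2 = a + 1 := by omega
          rw [e1, e2] at ih1
          rw [e1]
          have step : (a + 2) * ((3 + a) * ℬ₁.card) ≤ (a + 2) * ((a + 2) * (∂ ℬ₁).card) := by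
            calc (a + 2) * ((3 + a) * ℬ₁.card) = (3 + a) * ((a + 2) * ℬ₁.card) := by ring
              _ ≤ (3 + a) * ((a + 1) * (∂ ℬ₁).card) := Nat.mul_le_mul_left _ ih1
              _ = ((3 + a) * (a + 1)) * (∂ ℬ₁).card := by ring
              _ ≤ ((a + 2) * (a + 2)) * (∂ ℬ₁).card := by
                  apply Nat.mul_le_mul_right
                  nlinarith
              _ = (a + 2) * ((a + 2) * (∂ ℬ₁).card) := by ring
          exact Nat.le_of_mul_le_mul_left step (by omega)
        · have hℓeq : ℓ = 2 := by omega
          have hempty : ℬ₁ = ∅ := by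
            rcases ℬ₁.eq_empty_or_nonempty with he | ⟨A, hA⟩
            · exact he
            · exfalso
              have := h21 A hA A hA
              rw [inter_self, hs1 A hA, hℓeq] at this
              omega
          rw [hempty]
          simp
      -- combine
      calc ℓ * 𝒜.card = ℓ * ℬ.card := by rw [hbc]
        _ = ℓ * ℬ₀.card + ℓ * ℬ₁.card := by rw [hc01, hc1']; ring
        _ ≤ (ℓ - 1) * (∂ ℬ₀).card + (ℓ - 1) * (∂ ℬ₁).card := Nat.add_le_add ih0 ih1'
        _ ≤ (ℓ - 1) * (∂ ℬ₀ ∪ ℬ₁).card + (ℓ - 1) * ((∂ ℬ₁).image (insert p)).card := by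
            apply Nat.add_le_add
            · exact Nat.mul_le_mul_left _ (card_le_card subset_union_left)
            · rw [hYcard]
        _ = (ℓ - 1) * ((∂ ℬ₀ ∪ ℬ₁).card + ((∂ ℬ₁).image (insert p)).card) := by ring
        _ = (ℓ - 1) * ((∂ ℬ₀ ∪ ℬ₁) ∪ (∂ ℬ₁).image (insert p)).card := by
            rw [card_union_of_disjoint hdisjXY]
        _ ≤ (ℓ - 1) * (∂ ℬ).card := Nat.mul_le_mul_left _ (card_le_card (union_subset hXsub hYsub))
        _ ≤ (ℓ - 1) * (∂ 𝒜).card := Nat.mul_le_mul_left _ hbs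

lemma shadow_ge {ℓ : ℕ} (hℓ : 2 ≤ ℓ) {𝒜 : Finset (Finset ℕ)} {m : ℕ}
    (hg : ∀ A ∈ 𝒜, A ⊆ range m) (hs : ∀ A ∈ 𝒜, A.card = ℓ) (h2 : Inter2 𝒜) :
    𝒜.card ≤ (∂ 𝒜).card := by
  have h := shadow_ratio m ℓ 𝒜 hg hs h2
  have h2' : ℓ * 𝒜.card ≤ ℓ * (∂ 𝒜).card :=
    h.trans (Nat.mul_le_mul_right _ (by omega))
  exact Nat.le_of_mul_le_mul_left h2' (by omega)

/-- Core pairing bound: level `m+1-ℓ` of `W` together with the shadow of level `ℓ` fit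
into the `(m+1-ℓ)`-th layer. -/
lemma pair_core {m ℓ : ℕ} {W : Finset (Finset ℕ)} (hg : ∀ A ∈ W, A ⊆ range m)
    (h2 : Inter2 W) (hl2 : 2 ≤ ℓ) (hlm : ℓ ≤ m) :
    (W.filter (fun A => A.card = m + 1 - ℓ)).card
      + (∂ (W.filter (fun A => A.card = ℓ))).card ≤ Nat.choose m (m + 1 - ℓ) := by
  classical
  set Wl := W.filter (fun A => A.card = ℓ) with hWl
  set Wl' := W.filter (fun A => A.card = m + 1 - ℓ) with hWl'
  set N := (∂ Wl).image (fun B => range m \ B) with hN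
  have hshg : ∀ B ∈ ∂ Wl, B ⊆ range m :=
    fun B hB => shadow_range (fun A hA => hg A (mem_filter.1 hA).1) hB
  have hshs : ∀ B ∈ ∂ Wl, B.card = ℓ - 1 :=
    fun B hB => shadow_card (fun A hA => (mem_filter.1 hA).2) hB
  have hNcard : N.card = (∂ Wl).card := by
    apply card_image_of_injOn
    intro B₁ h₁ B₂ h₂' he
    have he' : range m \ B₁ = range m \ B₂ := he
    have e₁ : range m \ (range m \ B₁) = B₁ := Finset.sdiff_sdiff_eq_self (hshg B₁ h₁)
    have e₂ : range m \ (range m \ B₂) = B₂ := Finset.sdiff_sdiff_eq_self (hshg B₂ h₂')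
    rw [← e₁, ← e₂, he']
  have hdisj : Disjoint Wl' N := by
    rw [disjoint_left]
    intro E hE hEN
    obtain ⟨B, hB, rfl⟩ := mem_image.1 hEN
    obtain ⟨A, hA, y, hy, rfl⟩ := mem_shadow_iff.1 hB
    have hAW : A ∈ W := (mem_filter.1 hA).1
    have hEW : range m \ A.erase y ∈ W := (mem_filter.1 hE).1
    have h22 := h2 _ hEW A hAW
    have heq : (range m \ A.erase y) ∩ A = {y} := by
      ext x
      simp only [mem_inter, mem_sdiff, mem_erase, mem_singleton]
      constructor
      · rintro ⟨⟨hxr, hxe⟩, hxA⟩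
        by_contra hne
        exact hxe ⟨hne, hxA⟩
      · rintro rfl
        exact ⟨⟨hg A hAW hy, fun h => h.1 rfl⟩, hy⟩
    rw [heq] at h22
    simp at h22
  have hsubN : Wl' ∪ N ⊆ powersetCard (m + 1 - ℓ) (range m) := by
    apply union_subset
    · intro E hE
      rw [mem_powersetCard]
      exact ⟨hg E (mem_filter.1 hE).1, (mem_filter.1 hE).2⟩
    · intro E hE
      obtain ⟨B, hB, rfl⟩ := mem_image.1 hE
      rw [mem_powersetCard]
      refine ⟨sdiff_subset, ?_⟩
      rw [card_sdiff_of_subset (hshg B hB), card_range, hshs B hB]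
      omega
  calc Wl'.card + (∂ Wl).card = Wl'.card + N.card := by rw [hNcard]
    _ = (Wl' ∪ N).card := (card_union_of_disjoint hdisj).symm
    _ ≤ (powersetCard (m + 1 - ℓ) (range m)).card := card_le_card hsubN
    _ = Nat.choose m (m + 1 - ℓ) := by rw [card_powersetCard, card_range]

lemma pair_bound {m ℓ : ℕ} {W : Finset (Finset ℕ)} (hg : ∀ A ∈ W, A ⊆ range m)
    (h2 : Inter2 W) (hl2 : 2 ≤ ℓ) (hlm : ℓ ≤ m) :
    (W.filter (fun A => A.card = m + 1 - ℓ)).card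
      + (W.filter (fun A => A.card = ℓ)).card ≤ Nat.choose m (m + 1 - ℓ) := by
  have hcore := pair_core hg h2 hl2 hlm
  have hsh : (W.filter (fun A => A.card = ℓ)).card
      ≤ (∂ (W.filter (fun A => A.card = ℓ))).card := by
    apply shadow_ge hl2 (m := m)
    · exact fun A hA => hg A (mem_filter.1 hA).1
    · exact fun A hA => (mem_filter.1 hA).2
    · exact fun A hA B hB => h2 A (mem_filter.1 hA).1 B (mem_filter.1 hB).1
  omega

lemma self_bound {k : ℕ} (hk : 1 ≤ k) {W : Finset (Finset ℕ)}
    (hg : ∀ A ∈ W, A ⊆ range (2 * k + 1)) (h2 : Inter2 W) :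
    (W.filter (fun A => A.card = k + 1)).card ≤ Nat.choose (2 * k) (k + 1) := by
  classical
  have hself : 2 * k + 1 + 1 - (k + 1) = k + 1 := by omega
  have hcore := pair_core (ℓ := k + 1) hg h2 (by omega) (by omega)
  rw [hself] at hcore
  have hratio := shadow_ratio (2 * k + 1) (k + 1) (W.filter (fun A => A.card = k + 1))
    (fun A hA => hg A (mem_filter.1 hA).1) (fun A hA => (mem_filter.1 hA).2)
    (fun A hA B hB => h2 A (mem_filter.1 hA).1 B (mem_filter.1 hB).1)
  simp only [Nat.add_sub_cancel] at hratio
  set Bh := (W.filter (fun A => A.card = k + 1)).card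
  set Sh := (∂ (W.filter (fun A => A.card = k + 1))).card
  have key : (2 * k + 1) * Bh ≤ k * Nat.choose (2 * k + 1) (k + 1) := by
    calc (2 * k + 1) * Bh = k * Bh + (k + 1) * Bh := by ring
      _ ≤ k * Bh + k * Sh := Nat.add_le_add_left hratio _
      _ = k * (Bh + Sh) := by ring
      _ ≤ k * Nat.choose (2 * k + 1) (k + 1) := Nat.mul_le_mul_left _ hcore
  have hstep : Nat.choose (2 * k) (k + 1) * (k + 1) = Nat.choose (2 * k) k * k := by
    have := Nat.choose_succ_right_eq (2 * k) k
    rw [this]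
    congr 1
    omega
  have hid : k * Nat.choose (2 * k + 1) (k + 1) = (2 * k + 1) * Nat.choose (2 * k) (k + 1) := by
    rw [Nat.choose_succ_succ']
    calc k * (Nat.choose (2 * k) k + Nat.choose (2 * k) (k + 1))
        = Nat.choose (2 * k) k * k + k * Nat.choose (2 * k) (k + 1) := by ring
      _ = Nat.choose (2 * k) (k + 1) * (k + 1) + k * Nat.choose (2 * k) (k + 1) := by
          rw [hstep]
      _ = (2 * k + 1) * Nat.choose (2 * k) (k + 1) := by ring
  rw [hid] at key
  exact Nat.le_of_mul_le_mul_left key (by omega)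

theorem katona2 {m : ℕ} {W : Finset (Finset ℕ)} (hg : ∀ A ∈ W, A ⊆ range m)
    (h2 : Inter2 W) : W.card ≤ 2 ^ (m - 1) - Nat.choose (m - 1) ((m - 1) / 2) := by
  classical
  have hmem2 : ∀ A ∈ W, 2 ≤ A.card := by
    intro A hA
    have := h2 A hA A hA
    rwa [inter_self] at this
  by_cases hm1 : m ≤ 1
  · have hW : W = ∅ := by
      rw [eq_empty_iff_forall_notMem]
      intro A hA
      have h1 := hmem2 A hA
      have h2' := (card_le_card (hg A hA)).trans_eq (card_range m)
      omega
    rw [hW]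
    simp
  push_neg at hm1
  set B : ℕ → ℕ := fun ℓ => (W.filter (fun A => A.card = ℓ)).card with hBdef
  have hW : W.card = ∑ ℓ ∈ Ico 0 (m + 1), B ℓ := by
    rw [Nat.Ico_zero_eq_range]
    apply card_eq_sum_card_fiberwise
    intro A hA
    rw [mem_coe, mem_range]
    have := (card_le_card (hg A hA)).trans_eq (card_range m)
    omega
  have hB01 : ∑ ℓ ∈ Ico 0 2, B ℓ = 0 := by
    apply sum_eq_zero
    intro ℓ hℓ
    rw [mem_Ico] at hℓ
    rw [hBdef]
    simp only [card_eq_zero]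
    rw [filter_eq_empty_iff]
    intro A hA hcard
    have := hmem2 A hA
    omega
  have hBm : B m ≤ 1 := by
    rw [hBdef]
    apply card_le_one.2
    intro A hA A' hA'
    obtain ⟨hAW, hAc⟩ := mem_filter.1 hA
    obtain ⟨hAW', hAc'⟩ := mem_filter.1 hA'
    have e1 : A = range m := eq_of_subset_of_card_le (hg A hAW) (by rw [card_range, hAc])
    have e2 : A' = range m := eq_of_subset_of_card_le (hg A' hAW') (by rw [card_range, hAc'])
    rw [e1, e2]
  have pairB : ∀ ℓ, 2 ≤ ℓ → ℓ ≤ m → B ℓ + B (m + 1 - ℓ) ≤ Nat.choose m (m + 1 - ℓ) := by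
    intro ℓ hl2 hlm
    have h := pair_bound hg h2 hl2 hlm
    have e : B ℓ = (W.filter (fun A => A.card = ℓ)).card := rfl
    have e' : B (m + 1 - ℓ) = (W.filter (fun A => A.card = m + 1 - ℓ)).card := rfl
    omega
  rcases Nat.even_or_odd m with hpar | hpar
  · -- even case : m = 2 * H
    obtain ⟨H, hH⟩ := hpar
    have hHm : m = 2 * H := by omega
    have hH1 : 1 ≤ H := by omega
    -- split the sum
    have split1 : ∑ ℓ ∈ Ico 0 (m + 1), B ℓ = ∑ ℓ ∈ Ico 0 m, B ℓ + B m :=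
      sum_Ico_succ_top (Nat.zero_le m) B
    have split2 : ∑ ℓ ∈ Ico 0 m, B ℓ = ∑ ℓ ∈ Ico 0 2, B ℓ + ∑ ℓ ∈ Ico 2 m, B ℓ :=
      (sum_Ico_consecutive B (by omega) (by omega)).symm
    have split3 : ∑ ℓ ∈ Ico 2 m, B ℓ
        = ∑ ℓ ∈ Ico 2 (H + 1), B ℓ + ∑ ℓ ∈ Ico (H + 1) m, B ℓ :=
      (sum_Ico_consecutive B (by omega) (by omega)).symm
    have flip : ∑ ℓ ∈ Ico (H + 1) m, B ℓ = ∑ ℓ ∈ Ico 2 (H + 1), B (m + 1 - ℓ) := by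
      apply sum_nbij' (fun ℓ => m + 1 - ℓ) (fun ℓ => m + 1 - ℓ)
      · intro a ha; rw [mem_Ico] at *; omega
      · intro a ha; rw [mem_Ico] at *; omega
      · intro a ha; rw [mem_Ico] at ha; omega
      · intro a ha; rw [mem_Ico] at ha; omega
      · intro a ha
        rw [mem_Ico] at ha
        have : m + 1 - (m + 1 - a) = a := by omega
        rw [this]
    have hsum : W.card = ∑ ℓ ∈ Ico 2 (H + 1), (B ℓ + B (m + 1 - ℓ)) + B m := by
      rw [hW, split1, split2, split3, flip, hB01, sum_add_distrib]
      omega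
    have hbound : W.card ≤ ∑ ℓ ∈ Ico 2 (H + 1), Nat.choose m (m + 1 - ℓ) + 1 := by
      rw [hsum]
      apply Nat.add_le_add _ hBm
      apply sum_le_sum
      intro ℓ hℓ
      rw [mem_Ico] at hℓ
      exact pairB ℓ hℓ.1 (by omega)
    have flip2 : ∑ ℓ ∈ Ico 2 (H + 1), Nat.choose m (m + 1 - ℓ)
        = ∑ k ∈ Ico (H + 1) m, Nat.choose m k := by
      apply sum_nbij' (fun ℓ => m + 1 - ℓ) (fun ℓ => m + 1 - ℓ)
      · intro a ha; rw [mem_Ico] at *; omega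
      · intro a ha; rw [mem_Ico] at *; omega
      · intro a ha; rw [mem_Ico] at ha; omega
      · intro a ha; rw [mem_Ico] at ha; omega
      · intro a ha; rfl
    have htop : ∑ k ∈ Ico (H + 1) m, Nat.choose m k + 1
        = ∑ k ∈ Ico (H + 1) (m + 1), Nat.choose m k := by
      rw [sum_Ico_succ_top (by omega : H + 1 ≤ m), Nat.choose_self]
    set T := ∑ k ∈ Ico (H + 1) (m + 1), Nat.choose m k with hT
    have hWT : W.card ≤ T := by
      rw [← htop, ← flip2]
      exact hbound
    -- reflection
    have hrefl : T = ∑ k ∈ Ico 0 H, Nat.choose m k := by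
      rw [hT]
      apply sum_nbij' (fun k => m - k) (fun k => m - k)
      · intro a ha; rw [mem_Ico] at *; omega
      · intro a ha; rw [mem_Ico] at *; omega
      · intro a ha; rw [mem_Ico] at ha; omega
      · intro a ha; rw [mem_Ico] at ha; omega
      · intro a ha
        rw [mem_Ico] at ha
        rw [← Nat.choose_symm (by omega : a ≤ m)]
    have htotal : ∑ k ∈ Ico 0 (m + 1), Nat.choose m k = 2 ^ m := by
      rw [Nat.Ico_zero_eq_range]
      exact Nat.sum_range_choose m
    have hsplitC : ∑ k ∈ Ico 0 (m + 1), Nat.choose m k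
        = ∑ k ∈ Ico 0 H, Nat.choose m k
          + (Nat.choose m H + ∑ k ∈ Ico (H + 1) (m + 1), Nat.choose m k) := by
      rw [← sum_Ico_consecutive (Nat.choose m) (by omega : 0 ≤ H) (by omega : H ≤ m + 1)]
      congr 1
      rw [sum_eq_sum_Ico_succ_bot (by omega : H < m + 1)]
    -- C(m, H) = 2 * C(m-1, (m-1)/2)
    obtain ⟨K, rfl⟩ : ∃ K, H = K + 1 := ⟨H - 1, by omega⟩
    have hmK : m = 2 * K + 2 := by omega
    have hCH : Nat.choose m (K + 1) = 2 * Nat.choose (m - 1) ((m - 1) / 2) := by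
      have e1 : m - 1 = 2 * K + 1 := by omega
      have e2 : (m - 1) / 2 = K := by omega
      rw [e2, e1, hmK]
      have e3 : 2 * K + 2 = (2 * K + 1) + 1 := by ring
      rw [e3, Nat.choose_succ_succ', Nat.choose_symm_half]
      ring
    have hpow : 2 ^ m = 2 * 2 ^ (m - 1) := by
      have h' : m = (m - 1) + 1 := by omega
      conv_lhs => rw [h']
      rw [pow_succ]
      ring
    set c := Nat.choose (m - 1) ((m - 1) / 2) with hc
    have hTc : 2 ^ m = T + (2 * c + T) := by
      rw [← htotal, hsplitC, ← hrefl, hCH]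
    omega
  · -- odd case : m = 2 * k + 1
    obtain ⟨k, hk⟩ := hpar
    have hk1 : 1 ≤ k := by omega
    have split1 : ∑ ℓ ∈ Ico 0 (m + 1), B ℓ = ∑ ℓ ∈ Ico 0 m, B ℓ + B m :=
      sum_Ico_succ_top (Nat.zero_le m) B
    have split2 : ∑ ℓ ∈ Ico 0 m, B ℓ = ∑ ℓ ∈ Ico 0 2, B ℓ + ∑ ℓ ∈ Ico 2 m, B ℓ :=
      (sum_Ico_consecutive B (by omega) (by omega)).symm
    have split3 : ∑ ℓ ∈ Ico 2 m, B ℓ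
        = ∑ ℓ ∈ Ico 2 (k + 1), B ℓ + ∑ ℓ ∈ Ico (k + 1) m, B ℓ :=
      (sum_Ico_consecutive B (by omega) (by omega)).symm
    have split4 : ∑ ℓ ∈ Ico (k + 1) m, B ℓ = B (k + 1) + ∑ ℓ ∈ Ico (k + 2) m, B ℓ :=
      sum_eq_sum_Ico_succ_bot (by omega) B
    have flip : ∑ ℓ ∈ Ico (k + 2) m, B ℓ = ∑ ℓ ∈ Ico 2 (k + 1), B (m + 1 - ℓ) := by
      apply sum_nbij' (fun ℓ => m + 1 - ℓ) (fun ℓ => m + 1 - ℓ)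
      · intro a ha; rw [mem_Ico] at *; omega
      · intro a ha; rw [mem_Ico] at *; omega
      · intro a ha; rw [mem_Ico] at ha; omega
      · intro a ha; rw [mem_Ico] at ha; omega
      · intro a ha
        rw [mem_Ico] at ha
        have : m + 1 - (m + 1 - a) = a := by omega
        rw [this]
    have hsum : W.card
        = ∑ ℓ ∈ Ico 2 (k + 1), (B ℓ + B (m + 1 - ℓ)) + B (k + 1) + B m := by
      rw [hW, split1, split2, split3, split4, flip, hB01, sum_add_distrib]
      omega
    have hself : B (k + 1) ≤ Nat.choose (2 * k) (k + 1) := by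
      rw [hBdef]
      apply self_bound hk1 _ h2
      intro A hA
      have : range m = range (2 * k + 1) := by rw [hk]
      rw [← this]
      exact hg A hA
    have hbound : W.card
        ≤ ∑ ℓ ∈ Ico 2 (k + 1), Nat.choose m (m + 1 - ℓ)
          + Nat.choose (2 * k) (k + 1) + 1 := by
      rw [hsum]
      apply Nat.add_le_add _ hBm
      apply Nat.add_le_add _ hself
      apply sum_le_sum
      intro ℓ hℓ
      rw [mem_Ico] at hℓ
      exact pairB ℓ hℓ.1 (by omega)
    have flip2 : ∑ ℓ ∈ Ico 2 (k + 1), Nat.choose m (m + 1 - ℓ)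
        = ∑ j ∈ Ico (k + 2) m, Nat.choose m j := by
      apply sum_nbij' (fun ℓ => m + 1 - ℓ) (fun ℓ => m + 1 - ℓ)
      · intro a ha; rw [mem_Ico] at *; omega
      · intro a ha; rw [mem_Ico] at *; omega
      · intro a ha; rw [mem_Ico] at ha; omega
      · intro a ha; rw [mem_Ico] at ha; omega
      · intro a ha; rfl
    have htop : ∑ j ∈ Ico (k + 2) m, Nat.choose m j + 1
        = ∑ j ∈ Ico (k + 2) (m + 1), Nat.choose m j := by
      rw [sum_Ico_succ_top (by omega : k + 2 ≤ m), Nat.choose_self]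
    set T' := ∑ j ∈ Ico (k + 2) (m + 1), Nat.choose m j with hT'
    have hWT : W.card ≤ T' + Nat.choose (2 * k) (k + 1) := by
      calc W.card ≤ ∑ ℓ ∈ Ico 2 (k + 1), Nat.choose m (m + 1 - ℓ)
            + Nat.choose (2 * k) (k + 1) + 1 := hbound
        _ = ∑ j ∈ Ico (k + 2) m, Nat.choose m j + 1 + Nat.choose (2 * k) (k + 1) := by
            rw [flip2]; ring
        _ = T' + Nat.choose (2 * k) (k + 1) := by rw [htop]
    set T'' := ∑ j ∈ Ico (k + 1) (m + 1), Nat.choose m j with hT''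
    have hT'T'' : T'' = Nat.choose m (k + 1) + T' := by
      rw [hT'', hT']
      exact sum_eq_sum_Ico_succ_bot (by omega) _
    have hpascal : Nat.choose m (k + 1)
        = Nat.choose (2 * k) k + Nat.choose (2 * k) (k + 1) := by
      have : m = (2 * k) + 1 := by omega
      rw [this, Nat.choose_succ_succ']
    have hrefl : T'' = ∑ j ∈ Ico 0 (k + 1), Nat.choose m j := by
      rw [hT'']
      apply sum_nbij' (fun j => m - j) (fun j => m - j)
      · intro a ha; rw [mem_Ico] at *; omega
      · intro a ha; rw [mem_Ico] at *; omega
      · intro a ha; rw [mem_Ico] at ha; omega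
      · intro a ha; rw [mem_Ico] at ha; omega
      · intro a ha
        rw [mem_Ico] at ha
        rw [← Nat.choose_symm (by omega : a ≤ m)]
    have htotal : ∑ j ∈ Ico 0 (m + 1), Nat.choose m j = 2 ^ m := by
      rw [Nat.Ico_zero_eq_range]
      exact Nat.sum_range_choose m
    have hsplitC : ∑ j ∈ Ico 0 (m + 1), Nat.choose m j
        = ∑ j ∈ Ico 0 (k + 1), Nat.choose m j + T'' := by
      rw [hT'']
      exact (sum_Ico_consecutive (Nat.choose m) (by omega) (by omega)).symm
    have hpow : 2 ^ m = 2 * 2 ^ (m - 1) := by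
      have h' : m = (m - 1) + 1 := by omega
      conv_lhs => rw [h']
      rw [pow_succ]
      ring
    have hcc : Nat.choose (m - 1) ((m - 1) / 2) = Nat.choose (2 * k) k := by
      have e1 : m - 1 = 2 * k := by omega
      have e2 : (m - 1) / 2 = k := by omega
      rw [e2, e1]
    have h2T : 2 ^ m = T'' + T'' := by
      rw [← htotal, hsplitC, hrefl]
    rw [hcc]
    omega

section Envy

variable {α : Type*} [DecidableEq α]

lemma envy1 {M A B : Finset α} {u : Finset α → ℝ}
    (hum : ∀ X Y : Finset α, X ⊆ Y → u X ≤ u Y)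
    (hnA : ¬ EF1 M u A) (hnB : ¬ EF1 M u B) :
    2 ≤ ((M \ A) ∩ (M \ B)).card := by
  simp only [EF1, not_or, not_exists, not_le] at hnA hnB
  push_neg at hnA hnB
  obtain ⟨hA1, hA2⟩ := hnA
  obtain ⟨hB1, hB2⟩ := hnB
  by_contra hcard
  push_neg at hcard
  set D := (M \ A) ∩ (M \ B) with hD
  rcases D.eq_empty_or_nonempty with hDe | ⟨x, hx⟩
  · -- M \ A ⊆ B and M \ B ⊆ A
    have hsub1 : M \ A ⊆ B := by
      intro y hy
      by_contra hyB
      have : y ∈ D := mem_inter.2 ⟨hy, mem_sdiff.2 ⟨(mem_sdiff.1 hy).1, hyB⟩⟩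
      rw [hDe] at this
      exact notMem_empty _ this
    have hsub2 : M \ B ⊆ A := by
      intro y hy
      by_contra hyA
      have : y ∈ D := mem_inter.2 ⟨mem_sdiff.2 ⟨(mem_sdiff.1 hy).1, hyA⟩, hy⟩
      rw [hDe] at this
      exact notMem_empty _ this
    have c1 : u (M \ A) ≤ u B := hum _ _ hsub1
    have c2 : u (M \ B) ≤ u A := hum _ _ hsub2
    linarith
  · have hDx : D = {x} := by
      apply eq_singleton_iff_unique_mem.2
      refine ⟨hx, fun y hy => ?_⟩
      by_contra hne
      have h2' : 2 ≤ D.card := by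
        have := Finset.one_lt_card.2 ⟨y, hy, x, hx, hne⟩
        omega
      omega
    have hxMA : x ∈ M \ A := (mem_inter.1 hx).1
    have hxMB : x ∈ M \ B := (mem_inter.1 hx).2
    have hsub1 : (M \ A).erase x ⊆ B := by
      intro y hy
      obtain ⟨hyx, hyMA⟩ := mem_erase.1 hy
      by_contra hyB
      have : y ∈ D := mem_inter.2 ⟨hyMA, mem_sdiff.2 ⟨(mem_sdiff.1 hyMA).1, hyB⟩⟩
      rw [hDx, mem_singleton] at this
      exact hyx this
    have hsub2 : (M \ B).erase x ⊆ A := by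
      intro y hy
      obtain ⟨hyx, hyMB⟩ := mem_erase.1 hy
      by_contra hyA
      have : y ∈ D := mem_inter.2 ⟨mem_sdiff.2 ⟨(mem_sdiff.1 hyMB).1, hyA⟩, hyMB⟩
      rw [hDx, mem_singleton] at this
      exact hyx this
    have c1 : u ((M \ A).erase x) ≤ u B := hum _ _ hsub1
    have c2 : u ((M \ B).erase x) ≤ u A := hum _ _ hsub2
    have d1 := hA2 x hxMA
    have d2 := hB2 x hxMB
    linarith

lemma envy2 {M A B : Finset α} {u : Finset α → ℝ}
    (hum : ∀ X Y : Finset α, X ⊆ Y → u X ≤ u Y) (hA : A ⊆ M) (hB : B ⊆ M)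
    (hnA : ¬ EF1 M u (M \ A)) (hnB : ¬ EF1 M u (M \ B)) :
    2 ≤ (A ∩ B).card := by
  have h := envy1 hum hnA hnB
  rwa [Finset.sdiff_sdiff_eq_self hA, Finset.sdiff_sdiff_eq_self hB] at h

end Envy

lemma choose_le_pow (n k : ℕ) : Nat.choose n k ≤ 2 ^ n := by
  rcases le_or_gt k n with h | h
  · calc Nat.choose n k ≤ ∑ i ∈ range (n + 1), Nat.choose n i :=
        single_le_sum (f := Nat.choose n) (fun i _ => Nat.zero_le _) (mem_range.2 (by omega))
      _ = 2 ^ n := Nat.sum_range_choose n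
  · rw [Nat.choose_eq_zero_of_lt h]
    exact Nat.zero_le _

/-- Transfer a 2-intersecting family of subsets of `M` to `ℕ` and apply Katona. -/
lemma transfer_card {α : Type*} [DecidableEq α] {M : Finset α} (𝒰 : Finset (Finset α))
    (hsub : ∀ A ∈ 𝒰, A ⊆ M) (h2 : ∀ A ∈ 𝒰, ∀ B ∈ 𝒰, 2 ≤ (A ∩ B).card) :
    𝒰.card ≤ 2 ^ (M.card - 1) - Nat.choose (M.card - 1) ((M.card - 1) / 2) := by
  classical
  set f : α → ℕ := fun a => if h : a ∈ M then ((M.equivFin ⟨a, h⟩ : Fin M.card) : ℕ) else 0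
    with hf
  have hfval : ∀ a (ha : a ∈ M), f a = ((M.equivFin ⟨a, ha⟩ : Fin M.card) : ℕ) := by
    intro a ha
    simp only [hf, dif_pos ha]
  have hfinj : Set.InjOn f M := by
    intro a ha b hb he
    rw [hfval a ha, hfval b hb] at he
    have h1 : M.equivFin ⟨a, ha⟩ = M.equivFin ⟨b, hb⟩ := Fin.val_injective he
    have h2' := M.equivFin.injective h1
    exact Subtype.mk_eq_mk.1 h2'
  have hflt : ∀ a ∈ M, f a < M.card := by
    intro a ha
    rw [hfval a ha]
    exact (M.equivFin ⟨a, ha⟩).is_lt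
  have himg_card : ∀ X : Finset α, X ⊆ M → (X.image f).card = X.card := by
    intro X hX
    exact card_image_of_injOn (hfinj.mono hX)
  have himg_inj : ∀ X Y : Finset α, X ⊆ M → Y ⊆ M → X.image f = Y.image f → X = Y := by
    intro X Y hX hY he
    apply Finset.Subset.antisymm
    · intro x hx
      have : f x ∈ Y.image f := he ▸ mem_image_of_mem f hx
      obtain ⟨y, hy, hfe⟩ := mem_image.1 this
      rwa [← hfinj (hY hy) (hX hx) hfe]
    · intro y hy
      have : f y ∈ X.image f := he ▸ mem_image_of_mem f hy
      obtain ⟨x, hx, hfe⟩ := mem_image.1 this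
      rwa [← hfinj (hX hx) (hY hy) hfe]
  set 𝒰' := 𝒰.image (fun A => A.image f) with h𝒰'
  have hcard' : 𝒰'.card = 𝒰.card := by
    apply card_image_of_injOn
    intro A hA B hB he
    exact himg_inj A B (hsub A (mem_coe.1 hA)) (hsub B (mem_coe.1 hB)) he
  have hrange' : ∀ X ∈ 𝒰', X ⊆ range M.card := by
    intro X hX
    obtain ⟨A, hA, rfl⟩ := mem_image.1 hX
    intro x hx
    obtain ⟨a, ha, rfl⟩ := mem_image.1 hx
    exact mem_range.2 (hflt a (hsub A hA ha))
  have h2' : Inter2 𝒰' := by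
    intro X hX Y hY
    obtain ⟨A, hA, rfl⟩ := mem_image.1 hX
    obtain ⟨B, hB, rfl⟩ := mem_image.1 hY
    have hAB := h2 A hA B hB
    calc 2 ≤ (A ∩ B).card := hAB
      _ = ((A ∩ B).image f).card := (himg_card _ ((inter_subset_left).trans (hsub A hA))).symm
      _ ≤ (A.image f ∩ B.image f).card := card_le_card (image_inter_subset _ _ _)
  rw [← hcard']
  exact katona2 hrange' h2'

end EF1Aux

open EF1Aux in
theorem EF1_allocations_count' {α : Type*} [DecidableEq α] (M : Finset α)
    (u₁ u₂ : Finset α → ℝ) (hu₁0 : u₁ ∅ = 0) (hu₂0 : u₂ ∅ = 0)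
    (hu₁m : ∀ A B : Finset α, A ⊆ B → u₁ A ≤ u₁ B)
    (hu₂m : ∀ A B : Finset α, A ⊆ B → u₂ A ≤ u₂ B) :
    (if Even M.card then Nat.choose M.card (M.card / 2)
      else 2 * Nat.choose (M.card - 1) ((M.card - 1) / 2)) ≤
      (M.powerset.filter fun A => EF1 M u₁ A ∧ EF1 M u₂ (M \ A)).card := by
  classical
  by_cases hm0 : M.card = 0
  · have hM : M = ∅ := card_eq_zero.1 hm0
    subst hM
    have hmem : (∅ : Finset α) ∈
        ((∅ : Finset α).powerset.filter fun A => EF1 ∅ u₁ A ∧ EF1 ∅ u₂ (∅ \ A)) := by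
      rw [mem_filter]
      refine ⟨mem_powerset.2 (Finset.Subset.refl _), ?_, ?_⟩
      · exact Or.inl (by simp)
      · exact Or.inl (by simp)
    have h1 : 1 ≤ ((∅ : Finset α).powerset.filter
        fun A => EF1 ∅ u₁ A ∧ EF1 ∅ u₂ (∅ \ A)).card := card_pos.2 ⟨∅, hmem⟩
    simpa using h1
  · set m := M.card with hm
    have hm1 : 1 ≤ m := by omega
    set c := Nat.choose (m - 1) ((m - 1) / 2) with hc
    set S := M.powerset.filter (fun A => EF1 M u₁ A ∧ EF1 M u₂ (M \ A)) with hS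
    set U := M.powerset.filter (fun A => ¬ EF1 M u₁ A) with hU
    set V := M.powerset.filter (fun A => ¬ EF1 M u₂ (M \ A)) with hV
    -- covering
    have hcover : 2 ^ m ≤ S.card + (U.card + V.card) := by
      have hsub : M.powerset ⊆ S ∪ (U ∪ V) := by
        intro A hA
        simp only [hS, hU, hV, mem_union, mem_filter]
        by_cases h1 : EF1 M u₁ A
        · by_cases h2 : EF1 M u₂ (M \ A)
          · exact Or.inl ⟨hA, h1, h2⟩
          · exact Or.inr (Or.inr ⟨hA, h2⟩)
        · exact Or.inr (Or.inl ⟨hA, h1⟩)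
      calc 2 ^ m = M.powerset.card := (card_powerset M).symm
        _ ≤ (S ∪ (U ∪ V)).card := card_le_card hsub
        _ ≤ S.card + (U ∪ V).card := card_union_le _ _
        _ ≤ S.card + (U.card + V.card) := Nat.add_le_add_left (card_union_le _ _) _
    -- bound U via complements
    have hUbound : U.card ≤ 2 ^ (m - 1) - c := by
      have hinj : Set.InjOn (fun A => M \ A) ↑U := by
        intro A hA B hB he
        have hAM : A ⊆ M := mem_powerset.1 (mem_filter.1 (mem_coe.1 hA)).1
        have hBM : B ⊆ M := mem_powerset.1 (mem_filter.1 (mem_coe.1 hB)).1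
        have he' : M \ A = M \ B := he
        rw [← Finset.sdiff_sdiff_eq_self hAM, ← Finset.sdiff_sdiff_eq_self hBM, he']
      have hcardUc : (U.image (fun A => M \ A)).card = U.card := card_image_of_injOn hinj
      rw [← hcardUc]
      apply transfer_card
      · intro X hX
        obtain ⟨A, hA, rfl⟩ := mem_image.1 hX
        exact sdiff_subset
      · intro X hX Y hY
        obtain ⟨A, hA, rfl⟩ := mem_image.1 hX
        obtain ⟨B, hB, rfl⟩ := mem_image.1 hY
        exact envy1 hu₁m (mem_filter.1 hA).2 (mem_filter.1 hB).2
    have hVbound : V.card ≤ 2 ^ (m - 1) - c := by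
      apply transfer_card
      · intro A hA
        exact mem_powerset.1 (mem_filter.1 hA).1
      · intro A hA B hB
        exact envy2 hu₂m (mem_powerset.1 (mem_filter.1 hA).1)
          (mem_powerset.1 (mem_filter.1 hB).1)
          (mem_filter.1 hA).2 (mem_filter.1 hB).2
    have hcle : c ≤ 2 ^ (m - 1) := choose_le_pow _ _
    have hpow : 2 ^ m = 2 * 2 ^ (m - 1) := by
      have h' : m = (m - 1) + 1 := by omega
      conv_lhs => rw [h']
      rw [pow_succ]
      ring
    have hS2c : 2 * c ≤ S.card := by omega
    -- goal value ≤ 2 * c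
    have hgoal : (if Even m then Nat.choose m (m / 2)
        else 2 * Nat.choose (m - 1) ((m - 1) / 2)) ≤ 2 * c := by
      split_ifs with he
      · obtain ⟨H, hH⟩ := he
        have hH1 : 1 ≤ H := by omega
        obtain ⟨K, rfl⟩ : ∃ K, H = K + 1 := ⟨H - 1, by omega⟩
        have e1 : m - 1 = 2 * K + 1 := by omega
        have e2 : (m - 1) / 2 = K := by omega
        have e3 : m / 2 = K + 1 := by omega
        have e4 : m = (2 * K + 1) + 1 := by omega
        rw [hc, e3, e2, e1, e4, Nat.choose_succ_succ', Nat.choose_symm_half]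
        omega
      · rw [hc]
    exact hgoal.trans hS2c



/-- For two agents with arbitrary monotonic valuations on `m` items, the number of EF1
allocations is at least `C(m, m/2)` for even `m` and at least `2·C(m-1, (m-1)/2)` for
odd `m`. Allocations are identified with the bundle `A ⊆ M` given to agent 1. -/
theorem EF1_allocations_count {α : Type*} [DecidableEq α] (M : Finset α)
    (u₁ u₂ : Finset α → ℝ) (hu₁0 : u₁ ∅ = 0) (hu₂0 : u₂ ∅ = 0)
    (hu₁m : ∀ A B : Finset α, A ⊆ B → u₁ A ≤ u₁ B)
    (hu₂m : ∀ A B : Finset α, A ⊆ B → u₂ A ≤ u₂ B) :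
    (if Even M.card then Nat.choose M.card (M.card / 2)
      else 2 * Nat.choose (M.card - 1) ((M.card - 1) / 2)) ≤
      (M.powerset.filter fun A => EF1 M u₁ A ∧ EF1 M u₂ (M \ A)).card :=
  EF1_allocations_count' M u₁ u₂ hu₁0 hu₂0 hu₁m hu₂m
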